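/- Let E = ⋃_{n∈ℕ} E_n be a Hausdorff locally convex direct limit of an increasing sequence of complex normed spaces with contractive inclusions, F a locally convex complex space, R > 0, U := ⋃_n B_R^{E_n}(0). If f : U → F restricts to a bounded complex analytic map on each B_R^{E_n}(0), then f is complex analytic on U (continuous and locally given by convergent power series). -/

import Mathlib

open Metric Pointwise



lemma diffAt_of_hasSum_scalar {d : ℕ → ℂ} {g : ℂ → ℂ} {ε : ℝ} (hε : 0 < ε)
    (h : ∀ w : ℂ, ‖w‖ < ε → HasSum (fun k : ℕ => w ^ k • d k) (g w)) :
    DifferentiableAt ℂ g 0 := by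
  set p := FormalMultilinearSeries.ofScalars ℂ d with hp
  have hball : HasFPowerSeriesOnBall g p 0 (ENNReal.ofReal ε) := by
    refine ⟨?_, by simp [hε], ?_⟩
    · refine ENNReal.le_of_forall_nnreal_lt fun r hr => ?_
      have hrε : (r : ℝ) < ε := by
        have := ENNReal.toReal_lt_toReal (by simp) (by simp) |>.mpr hr
        simpa [ENNReal.toReal_ofReal hε.le] using this
      have hsum := h ((r : ℝ) : ℂ) (by simpa using hrε)
      have htend : Filter.Tendsto (fun n : ℕ => ‖p n‖ * (r : ℝ) ^ n) Filter.atTop (nhds 0) := by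
        have h0 := hsum.summable.tendsto_atTop_zero.norm
        rw [norm_zero] at h0
        simp only [norm_smul, norm_pow] at h0
        refine h0.congr fun n => ?_
        rw [FormalMultilinearSeries.ofScalars_norm]
        have hr' : ‖((r : ℝ) : ℂ)‖ = (r : ℝ) := by
          simp [Complex.norm_real, abs_of_nonneg r.2]
        rw [hr']
        ring
      exact p.le_radius_of_tendsto htend
    · intro y hy
      have hy' : ‖y‖ < ε := by
        simpa [edist_zero_right, ENNReal.lt_ofReal_iff_toReal_lt] using hy
      have := h y hy'
      refine HasSum.congr_fun (by simpa using this) fun n => ?_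
      rw [FormalMultilinearSeries.ofScalars_apply_eq]
      simp [smul_eq_mul]
      ring
  exact hball.hasFPowerSeriesAt.differentiableAt

lemma exists_clm_gauge {F : Type*} [AddCommGroup F] [Module ℝ F] [Module ℂ F]
    [IsScalarTower ℝ ℂ F] [TopologicalSpace F] [IsTopologicalAddGroup F] [ContinuousSMul ℝ F]
    {W : Set F} (hW : W ∈ nhds (0 : F)) (hconv : Convex ℝ W) (hbal : Balanced ℂ W)
    (v : F) :
    ∃ Λ : F →ₗ[ℂ] ℂ, Continuous Λ ∧ (∀ x, ‖Λ x‖ ≤ gauge W x) ∧ gauge W v ≤ ‖Λ v‖ := by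
  have habs : Absorbent ℝ W := absorbent_nhds_zero hW
  have hsmulR : ∀ (a : ℝ) (x : F), gauge W (a • x) = |a| * gauge W x := by
    intro a x
    have h1 : a • x = ((a : ℂ)) • x := (algebraMap_smul ℂ a x).symm
    rw [h1, gauge_smul hbal, Complex.norm_real, Real.norm_eq_abs]
  by_cases hv : v = 0
  · refine ⟨0, by exact continuous_const, fun x => ?_, ?_⟩
    · simpa using gauge_nonneg x
    · simp [hv, gauge_zero]
  · set q := gauge W with hq
    set pm := LinearPMap.mkSpanSingleton (K := ℝ) (L := ℝ) (σ := RingHom.id ℝ) v (q v) hv with hpm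
    have hf : ∀ x : pm.domain, pm x ≤ q (x : F) := by
      rintro ⟨x, hx⟩
      obtain ⟨a, rfl⟩ := Submodule.mem_span_singleton.1 hx
      have happ : pm ⟨a • v, hx⟩ = a • q v := by
        exact LinearPMap.mkSpanSingleton'_apply v (q v) _ a hx
      rw [happ]
      have : q (a • v) = |a| * q v := hsmulR a v
      rw [this]
      have := gauge_nonneg (s := W) v
      calc a • q v = a * q v := rfl
        _ ≤ |a| * q v := by
            apply mul_le_mul_of_nonneg_right (le_abs_self a) this
    obtain ⟨g, hg_eq, hg_le⟩ := exists_extension_of_le_sublinear pm q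
      (fun c hc x => by
        rw [hq]
        exact gauge_smul_of_nonneg hc.le x)
      (gauge_add_le hconv habs) hf
    have hgv : g v = q v := by
      have h1 := hg_eq ⟨v, Submodule.mem_span_singleton_self v⟩
      rw [h1]
      exact LinearPMap.mkSpanSingleton'_apply_self _ _ _ _
    set Λ := g.extendTo𝕜' (𝕜 := ℂ) with hΛ
    have hbound : ∀ x, ‖Λ x‖ ≤ q x := by
      intro x
      rcases eq_or_ne (Λ x) 0 with h0 | h0
      · rw [h0, norm_zero]; exact gauge_nonneg x
      · have hsq := g.norm_extendTo𝕜'_apply_sq (𝕜 := ℂ) x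
        have hle : g ((starRingEnd ℂ) (Λ x) • x) ≤ q ((starRingEnd ℂ) (Λ x) • x) := hg_le _
        have hqs : q ((starRingEnd ℂ) (Λ x) • x) = ‖Λ x‖ * q x := by
          rw [hq, gauge_smul hbal]
          simp
        have : ‖Λ x‖ ^ 2 ≤ ‖Λ x‖ * q x := by
          rw [show ‖Λ x‖ ^ 2 = g ((starRingEnd ℂ) (Λ x) • x) from hsq]
          exact hle.trans (le_of_eq hqs)
        have hpos : 0 < ‖Λ x‖ := norm_pos_iff.2 h0
        nlinarith
    have hlow : q v ≤ ‖Λ v‖ := by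
      have hre : RCLike.re (Λ v) = g v := g.extendTo𝕜'_apply_re (𝕜 := ℂ) v
      calc q v = g v := hgv.symm
        _ = (Λ v).re := by rw [← hre]; rfl
        _ ≤ |(Λ v).re| := le_abs_self _
        _ ≤ ‖Λ v‖ := Complex.abs_re_le_norm _
    have hcontat : ContinuousAt Λ 0 := by
      have ht : Filter.Tendsto Λ (nhds 0) (nhds 0) :=
        squeeze_zero_norm hbound (tendsto_gauge_nhds_zero hW)
      simpa [ContinuousAt, map_zero] using ht
    exact ⟨Λ, continuous_of_continuousAt_zero Λ hcontat, hbound, hlow⟩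

section iota

variable {X : ℕ → Type*} [∀ n, NormedAddCommGroup (X n)] [∀ n, NormedSpace ℂ (X n)]
  (j : ∀ n, X n →ₗ[ℂ] X (n + 1))

/-- Iterated bonding map. -/
def iotaX : ∀ {m N : ℕ}, m ≤ N → X m → X N :=
  fun {m N} h x => Nat.leRecOn h (fun {k} y => j k y) x

lemma iotaX_self {m : ℕ} (h : m ≤ m) (x : X m) : iotaX j h x = x :=
  Nat.leRecOn_self x

lemma iotaX_succ {m N : ℕ} (h : m ≤ N) (h' : m ≤ N + 1) (x : X m) :
    iotaX j h' x = j N (iotaX j h x) :=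
  Nat.leRecOn_succ h x

lemma iotaX_norm (hj : ∀ n (x : X n), ‖j n x‖ ≤ ‖x‖) {m N : ℕ} (h : m ≤ N) (x : X m) :
    ‖iotaX j h x‖ ≤ ‖x‖ := by
  induction N, h using Nat.le_induction with
  | base => rw [iotaX_self]
  | succ N hmN ih =>
    rw [iotaX_succ j hmN]
    exact (hj N _).trans ih

lemma iotaX_u {E : Type*} [AddCommGroup E] [Module ℂ E] (u : ∀ n, X n →ₗ[ℂ] E)
    (hcomp : ∀ n (x : X n), u (n + 1) (j n x) = u n x) {m N : ℕ} (h : m ≤ N) (x : X m) :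
    u N (iotaX j h x) = u m x := by
  induction N, h using Nat.le_induction with
  | base => rw [iotaX_self]
  | succ N hmN ih =>
    rw [iotaX_succ j hmN, hcomp]
    exact ih

end iota

lemma step_estimate {E F : Type*} [AddCommGroup E] [Module ℂ E]
    [AddCommGroup F] [Module ℝ F] [Module ℂ F] [IsScalarTower ℝ ℂ F]
    [TopologicalSpace F] [IsTopologicalAddGroup F] [ContinuousSMul ℝ F]
    {X : Type*} [NormedAddCommGroup X] [NormedSpace ℂ X]
    (u : X →ₗ[ℂ] E) (f : E → F) (R : ℝ)
    (hgat : ∀ a ∈ ball (0 : X) R, ∀ b : X, ∃ ε > (0 : ℝ), ∃ c : ℕ → F,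
      ∀ z : ℂ, ‖z‖ < ε → HasSum (fun k : ℕ => z ^ k • c k) (f (u (a + z • b))))
    {W : Set F} (hW : W ∈ nhds (0 : F)) (hconv : Convex ℝ W) (hbal : Balanced ℂ W)
    {M : ℝ} (hM : ∀ x ∈ ball (0 : X) R, gauge W (f (u x)) ≤ M)
    (y h : X) (hy : ‖y‖ < R) (hyh : ‖y‖ + ‖h‖ < R) :
    gauge W (f (u (y + h)) - f (u y)) ≤ (2 * M + 1) * (‖h‖ / (R - ‖y‖)) := by
  have hM0 : 0 ≤ M := le_trans (gauge_nonneg _) (hM 0 (by simpa using (lt_of_le_of_lt (norm_nonneg y) hy)))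
  rcases eq_or_ne h 0 with rfl | hne
  · simp [gauge_zero]
  · set ρ := (R - ‖y‖) / ‖h‖ with hρdef
    have hhpos : 0 < ‖h‖ := norm_pos_iff.2 hne
    have hRy : 0 < R - ‖y‖ := by linarith
    have hρ : 1 < ρ := (one_lt_div hhpos).2 (by linarith)
    obtain ⟨Λ, hΛcont, hΛle, hΛge⟩ :=
      exists_clm_gauge hW hconv hbal (f (u (y + h)) - f (u y))
    set φ : ℂ → ℂ := fun z => Λ (f (u (y + z • h))) with hφdef
    have hmemball : ∀ z : ℂ, ‖z‖ < ρ → y + z • h ∈ ball (0 : X) R := by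
      intro z hz
      rw [mem_ball_zero_iff]
      calc ‖y + z • h‖ ≤ ‖y‖ + ‖z • h‖ := norm_add_le _ _
        _ = ‖y‖ + ‖z‖ * ‖h‖ := by rw [norm_smul]
        _ < ‖y‖ + ρ * ‖h‖ := by
            have := mul_lt_mul_of_pos_right hz hhpos
            linarith
        _ = R := by
            rw [hρdef, div_mul_cancel₀ _ (ne_of_gt hhpos)]
            ring
    have hφdiff : DifferentiableOn ℂ φ (ball (0 : ℂ) ρ) := by
      intro z₀ hz₀
      apply DifferentiableAt.differentiableWithinAt
      have hz₀' := mem_ball_zero_iff.1 hz₀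
      obtain ⟨ε, hε, c, hc⟩ := hgat (y + z₀ • h) (hmemball z₀ hz₀') h
      have hg : ∀ w : ℂ, ‖w‖ < ε → HasSum (fun k : ℕ => w ^ k • Λ (c k)) (φ (z₀ + w)) := by
        intro w hw
        have h2 : HasSum (fun k : ℕ => Λ (w ^ k • c k)) (Λ (f (u (y + z₀ • h + w • h)))) :=
          (hc w hw).map Λ hΛcont
        simp only [map_smul] at h2
        have h3 : y + z₀ • h + w • h = y + (z₀ + w) • h := by
          rw [add_smul]; abel
        rw [h3] at h2
        exact h2
      have hgd : DifferentiableAt ℂ (fun w => φ (z₀ + w)) 0 := diffAt_of_hasSum_scalar hε hg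
      have hcomp : DifferentiableAt ℂ ((fun w => φ (z₀ + w)) ∘ (fun z : ℂ => z - z₀)) z₀ := by
        apply DifferentiableAt.comp
        · simpa using hgd
        · exact differentiableAt_id.sub_const z₀
      have : ((fun w => φ (z₀ + w)) ∘ (fun z : ℂ => z - z₀)) = φ := by
        funext z; simp [Function.comp]
      rwa [this] at hcomp
    have hφbound : ∀ z : ℂ, ‖z‖ < ρ → ‖φ z‖ ≤ M := fun z hz =>
      (hΛle _).trans (hM _ (hmemball z hz))
    have hmaps : Set.MapsTo φ (ball (0 : ℂ) ρ) (ball (φ 0) (2 * M + 1)) := by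
      intro z hz
      rw [mem_ball]
      calc dist (φ z) (φ 0) = ‖φ z - φ 0‖ := dist_eq_norm _ _
        _ ≤ ‖φ z‖ + ‖φ 0‖ := norm_sub_le _ _
        _ ≤ M + M := add_le_add (hφbound z (mem_ball_zero_iff.1 hz))
            (hφbound 0 (by simpa using lt_trans one_pos hρ))
        _ < 2 * M + 1 := by linarith
    have hone : (1 : ℂ) ∈ ball (0 : ℂ) ρ := by
      rw [mem_ball_zero_iff]; simpa using hρ
    have hsch := Complex.dist_le_div_mul_dist_of_mapsTo_ball hφdiff (hmaps.mono_right ball_subset_closedBall) hone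
    have hφ1 : φ 1 = Λ (f (u (y + h))) := by simp [hφdef]
    have hφ0 : φ 0 = Λ (f (u y)) := by simp [hφdef]
    have hdist : dist (φ 1) (φ 0) = ‖Λ (f (u (y + h)) - f (u y))‖ := by
      rw [dist_eq_norm, hφ1, hφ0, ← map_sub]
    calc gauge W (f (u (y + h)) - f (u y)) ≤ ‖Λ (f (u (y + h)) - f (u y))‖ := hΛge
      _ = dist (φ 1) (φ 0) := hdist.symm
      _ ≤ (2 * M + 1) / ρ * dist (1 : ℂ) 0 := hsch
      _ = (2 * M + 1) / ρ := by simp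
      _ = (2 * M + 1) * (‖h‖ / (R - ‖y‖)) := by
          rw [hρdef, div_div_eq_mul_div, mul_div_assoc]
/-- Theorem A.  Let `E` be a complex vector space which is the Hausdorff locally convex
direct limit of an increasing sequence of normed spaces `X n` (realized by injective
continuous linear maps `u n : X n → E` compatible with bonding maps of operator norm at
most `1`; the direct limit topology is encoded by requiring every basic set
`V(δ₁, δ₂, …)` to be a `0`-neighborhood).  Let `F` be a locally convex complex
topological vector space, `R > 0` and `U := ⋃ₙ uₙ(B_R(0))`.  If `f : U → F` restricts to
a bounded complex analytic map (i.e. continuous and Gateaux analytic, with von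
Neumann-bounded image) on each ball `B_R(0) ⊆ X n`, then `f` is complex analytic on `U`:
it is continuous on `U` and Gateaux analytic, i.e. admits convergent power series
expansions along all complex lines through points of `U`. -/
theorem stmt16 {E : Type*} [AddCommGroup E] [Module ℂ E] [TopologicalSpace E]
    [IsTopologicalAddGroup E] [ContinuousSMul ℂ E] [T2Space E]
    {F : Type*} [AddCommGroup F] [Module ℝ F] [Module ℂ F] [IsScalarTower ℝ ℂ F]
    [TopologicalSpace F] [IsTopologicalAddGroup F] [ContinuousSMul ℂ F]
    [LocallyConvexSpace ℝ F]
    (X : ℕ → Type*) [∀ n, NormedAddCommGroup (X n)] [∀ n, NormedSpace ℂ (X n)]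
    (u : ∀ n, X n →ₗ[ℂ] E) (huinj : ∀ n, Function.Injective (u n))
    (hucont : ∀ n, Continuous fun y : X n => u n y)
    (j : ∀ n, X n →ₗ[ℂ] X (n + 1)) (hj : ∀ n (x : X n), ‖j n x‖ ≤ ‖x‖)
    (hcomp : ∀ n (x : X n), u (n + 1) (j n x) = u n x)
    (hunion : ∀ x : E, ∃ n, x ∈ Set.range (u n))
    (hnhds : ∀ δ : ℕ → ℝ, (∀ i, 0 < δ i) →
      {x : E | ∃ (m : ℕ) (w : (i : Fin m) → X i.val),
          (∀ i, ‖w i‖ < δ i.val) ∧ x = ∑ i, u i.val (w i)} ∈ nhds (0 : E))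
    (R : ℝ) (hR : 0 < R) (f : E → F)
    (hcontn : ∀ n, ContinuousOn (fun y : X n => f (u n y)) (ball 0 R))
    (hgat : ∀ n, ∀ a ∈ ball (0 : X n) R, ∀ b : X n, ∃ ε > (0 : ℝ), ∃ c : ℕ → F,
      ∀ z : ℂ, ‖z‖ < ε → HasSum (fun k : ℕ => z ^ k • c k) (f (u n (a + z • b))))
    (hbdd : ∀ n, Bornology.IsVonNBounded ℂ ((fun y : X n => f (u n y)) '' ball 0 R)) :
    ContinuousOn f (⋃ n, (fun y : X n => u n y) '' ball 0 R) ∧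
      ∀ a ∈ ⋃ n, (fun y : X n => u n y) '' ball 0 R, ∀ b : E,
        ∃ ε > (0 : ℝ), ∃ c : ℕ → F,
          ∀ z : ℂ, ‖z‖ < ε → HasSum (fun k : ℕ => z ^ k • c k) (f (a + z • b)) := by
  haveI hSMC : SMulCommClass ℝ ℂ F := ⟨fun r c x => by
    rw [← algebraMap_smul ℂ r (c • x), ← algebraMap_smul ℂ r x, smul_smul, smul_smul, mul_comm]⟩
  haveI hCSR : ContinuousSMul ℝ F := IsScalarTower.continuousSMul ℂ
  constructor
  · -- Continuity
    intro a ha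
    apply ContinuousAt.continuousWithinAt
    obtain ⟨n, hn⟩ := Set.mem_iUnion.1 ha
    obtain ⟨x₀, hx₀, rfl⟩ := hn
    rw [ContinuousAt, Filter.tendsto_def]
    intro W' hW'
    set r := ‖x₀‖ with hrdef
    have hrR : r < R := mem_ball_zero_iff.1 hx₀
    have hRr : 0 < R - r := by linarith
    have htrans : {v : F | f (u n x₀) + v ∈ W'} ∈ nhds (0 : F) := by
      have hcont : Continuous fun v : F => f (u n x₀) + v := continuous_const.add continuous_id
      exact hcont.continuousAt.preimage_mem_nhds (by simpa using hW')
    obtain ⟨W₀, hW₀prop, hW₀sub⟩ : ∃ W₀ : Set F,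
        ((0 : F) ∈ W₀ ∧ IsOpen W₀ ∧ Balanced ℂ W₀ ∧ Convex ℝ W₀) ∧
          W₀ ⊆ {v : F | f (u n x₀) + v ∈ W'} := by
      obtain ⟨s, ⟨hs, hsconv⟩, hssub⟩ := (LocallyConvexSpace.convex_basis_zero ℝ F).mem_iff.1 htrans
      have hcore : balancedCore ℂ s ∈ nhds (0 : F) := balancedCore_mem_nhds_zero hs
      have hconv : Convex ℝ (balancedCore ℂ s) := by
        rw [balancedCore_eq_iInter (mem_of_mem_nhds hs)]
        refine convex_iInter fun r => convex_iInter fun _ => ?_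
        rintro _ ⟨x, hx, rfl⟩ _ ⟨y, hy, rfl⟩ a b ha hb hab
        refine ⟨a • x + b • y, hsconv hx hy ha hb hab, ?_⟩
        simp only [smul_add]
        rw [smul_comm a r x, smul_comm b r y]
      exact ⟨interior (balancedCore ℂ s), ⟨mem_interior_iff_mem_nhds.2 hcore, isOpen_interior,
        (balancedCore_balanced s).interior (mem_interior_iff_mem_nhds.2 hcore), hconv.interior⟩,
        interior_subset.trans ((balancedCore_subset s).trans hssub)⟩
    obtain ⟨hW₀0, hW₀open, hW₀bal, hW₀conv⟩ := hW₀prop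
    have hW₀nhds : W₀ ∈ nhds (0 : F) := hW₀open.mem_nhds hW₀0
    have hMex : ∀ N : ℕ, ∃ M : ℝ, 0 ≤ M ∧
        ∀ x ∈ ball (0 : X N) R, gauge W₀ (f (u N x)) ≤ M := by
      intro N
      have habsorb := hbdd N hW₀nhds
      rw [absorbs_iff_norm] at habsorb
      obtain ⟨t, ht⟩ := habsorb
      set cc : ℂ := ((max t 1 : ℝ) : ℂ) with hccdef
      have hcc : ‖cc‖ = max t 1 := by
        rw [hccdef, Complex.norm_real, Real.norm_eq_abs,
          abs_of_pos (lt_of_lt_of_le one_pos (le_max_right t 1))]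
      have hsub := ht cc (by rw [hcc]; exact le_max_left t 1)
      refine ⟨max t 1, le_trans zero_le_one (le_max_right t 1), fun x hx => ?_⟩
      have hmem : f (u N x) ∈ cc • W₀ := hsub ⟨x, hx, rfl⟩
      obtain ⟨w₀, hw₀, hw₀eq⟩ := Set.mem_smul_set.1 hmem
      rw [← hw₀eq]
      calc gauge W₀ (cc • w₀) = ‖cc‖ * gauge W₀ w₀ := gauge_smul hW₀bal cc w₀
        _ ≤ ‖cc‖ * 1 := mul_le_mul_of_nonneg_left (gauge_le_one_of_mem hw₀) (norm_nonneg _)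
        _ = max t 1 := by rw [mul_one, hcc]
    choose M hM0 hM using hMex
    set δ : ℕ → ℝ := fun i => (R - r) * (2:ℝ)⁻¹ ^ (i + 1) / (2 * (2 * M (max n (i + 1)) + 1))
      with hδdef
    have hδpos : ∀ i, 0 < δ i := by
      intro i
      apply div_pos (mul_pos hRr (pow_pos (by norm_num) _))
      have := hM0 (max n (i + 1)); linarith
    have hδle : ∀ i, δ i ≤ (R - r) / 4 * (1 / 2 : ℝ) ^ i := by
      intro i
      have hMi := hM0 (max n (i + 1))
      have hA : (0:ℝ) ≤ (R - r) * (2:ℝ)⁻¹ ^ (i + 1) := by positivity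
      have h1 : δ i ≤ (R - r) * (2:ℝ)⁻¹ ^ (i + 1) / 2 := by
        rw [hδdef]
        rw [div_le_div_iff₀ (by nlinarith : (0:ℝ) < 2 * (2 * M (max n (i + 1)) + 1))
          (by norm_num : (0:ℝ) < 2)]
        nlinarith [mul_nonneg hA hMi]
      calc δ i ≤ (R - r) * (2:ℝ)⁻¹ ^ (i + 1) / 2 := h1
        _ = (R - r) / 4 * (1 / 2 : ℝ) ^ i := by
            rw [pow_succ]
            ring
    have hδsum : ∀ m, ∑ i ∈ Finset.range m, δ i ≤ (R - r) / 2 := by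
      intro m
      have h1 : ∑ i ∈ Finset.range m, δ i
          ≤ ∑ i ∈ Finset.range m, (R - r) / 4 * (1 / 2 : ℝ) ^ i :=
        Finset.sum_le_sum fun i _ => hδle i
      have h2 : ∑ i ∈ Finset.range m, (1 / 2 : ℝ) ^ i ≤ 2 := sum_geometric_two_le m
      calc ∑ i ∈ Finset.range m, δ i
          ≤ (R - r) / 4 * ∑ i ∈ Finset.range m, (1 / 2 : ℝ) ^ i := by
            rw [← Finset.mul_sum] at h1; exact h1
        _ ≤ (R - r) / 4 * 2 := mul_le_mul_of_nonneg_left h2 (by positivity)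
        _ = (R - r) / 2 := by ring
    have hsum2 : ∀ m, r + ∑ i ∈ Finset.range m, δ i < R := by
      intro m; have := hδsum m; linarith
    have key : ∀ (m : ℕ) (w : (i : Fin m) → X i.val), (∀ i, ‖w i‖ < δ i.val) →
        ∃ y : X (max n m), ‖y‖ ≤ r + ∑ i ∈ Finset.range m, δ i ∧
          u (max n m) y = u n x₀ + ∑ i, u i.val (w i) ∧
          gauge W₀ (f (u (max n m) y) - f (u n x₀)) ≤ 1 - (2:ℝ)⁻¹ ^ m := by
      intro m
      induction m with
      | zero =>
        intro w hw
        refine ⟨iotaX j (le_max_left n 0) x₀, ?_, ?_, ?_⟩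
        · simpa using iotaX_norm j hj (le_max_left n 0) x₀
        · rw [iotaX_u j u hcomp]
          simp
        · rw [iotaX_u j u hcomp, sub_self, gauge_zero]
          simp
      | succ m ih =>
        intro w hw
        obtain ⟨y, hynorm, hyu, hygauge⟩ := ih (fun i => w i.castSucc) (fun i => by
          simpa using hw i.castSucc)
        have hLL' : max n m ≤ max n (m + 1) := max_le_max le_rfl (Nat.le_succ m)
        have hmL' : m ≤ max n (m + 1) := (Nat.le_succ m).trans (le_max_right n (m + 1))
        set y'' := iotaX j hLL' y with hy''def
        set h'' := iotaX j hmL' (w (Fin.last m)) with hh''def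
        have hy''n : ‖y''‖ ≤ ‖y‖ := iotaX_norm j hj _ _
        have hh''n : ‖h''‖ ≤ ‖w (Fin.last m)‖ := iotaX_norm j hj _ _
        have hwlast : ‖w (Fin.last m)‖ < δ m := by simpa using hw (Fin.last m)
        have hy''R : ‖y''‖ < R := lt_of_le_of_lt (hy''n.trans hynorm) (hsum2 m)
        have hy''h : ‖y''‖ + ‖h''‖ < R := by
          have h2 := hsum2 (m + 1)
          rw [Finset.sum_range_succ] at h2
          have := hy''n.trans hynorm
          have := hh''n.trans hwlast.le
          linarith
        have huy'' : u (max n (m + 1)) y'' = u (max n m) y := iotaX_u j u hcomp _ _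
        have huh'' : u (max n (m + 1)) h'' = u m (w (Fin.last m)) := iotaX_u j u hcomp _ _
        refine ⟨y'' + h'', ?_, ?_, ?_⟩
        · calc ‖y'' + h''‖ ≤ ‖y''‖ + ‖h''‖ := norm_add_le _ _
            _ ≤ (r + ∑ i ∈ Finset.range m, δ i) + δ m := by
                have := hy''n.trans hynorm
                have := hh''n.trans hwlast.le
                linarith
            _ = r + ∑ i ∈ Finset.range (m + 1), δ i := by rw [Finset.sum_range_succ]; ring
        · rw [map_add, huy'', huh'', hyu, Fin.sum_univ_castSucc]
          simp only [Fin.coe_castSucc, Fin.val_last]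
          abel
        · have hstep := step_estimate (u (max n (m + 1))) f R (hgat _) hW₀nhds hW₀conv hW₀bal
            (hM _) y'' h'' hy''R hy''h
          have hEq : f (u (max n (m + 1)) (y'' + h'')) - f (u n x₀)
              = (f (u (max n (m + 1)) (y'' + h'')) - f (u (max n (m + 1)) y''))
                + (f (u (max n m) y) - f (u n x₀)) := by rw [huy'']; abel
          calc gauge W₀ (f (u (max n (m + 1)) (y'' + h'')) - f (u n x₀))
              ≤ gauge W₀ (f (u (max n (m + 1)) (y'' + h'')) - f (u (max n (m + 1)) y''))
                + gauge W₀ (f (u (max n m) y) - f (u n x₀)) := by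
                rw [hEq]
                exact gauge_add_le hW₀conv (absorbent_nhds_zero hW₀nhds) _ _
            _ ≤ (2 * M (max n (m + 1)) + 1) * (‖h''‖ / (R - ‖y''‖)) + (1 - (2:ℝ)⁻¹ ^ m) :=
                add_le_add hstep hygauge
            _ ≤ (2:ℝ)⁻¹ ^ (m + 1) + (1 - (2:ℝ)⁻¹ ^ m) := by
                have hMn := hM0 (max n (m + 1))
                have hden : (R - r) / 2 ≤ R - ‖y''‖ := by
                  have := hδsum m
                  have := hy''n.trans hynorm
                  linarith
                have hnum : ‖h''‖ ≤ δ m := hh''n.trans hwlast.le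
                have hfrac : ‖h''‖ / (R - ‖y''‖) ≤ δ m / ((R - r) / 2) :=
                  div_le_div₀ (hδpos m).le hnum (by linarith) hden
                have heq2 : (2 * M (max n (m + 1)) + 1) * (δ m / ((R - r) / 2))
                    = (2:ℝ)⁻¹ ^ (m + 1) := by
                  rw [hδdef]
                  field_simp
                have := mul_le_mul_of_nonneg_left hfrac
                  (by linarith : (0:ℝ) ≤ 2 * M (max n (m + 1)) + 1)
                linarith
            _ = 1 - (2:ℝ)⁻¹ ^ (m + 1) := by rw [pow_succ]; ring
    have hVmem := hnhds δ hδpos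
    have hmap : Filter.map (fun v : E => u n x₀ + v) (nhds 0) = nhds (u n x₀) := by
      have := (Homeomorph.addLeft (u n x₀)).map_nhds_eq (0 : E)
      simpa using this
    rw [← hmap, Filter.mem_map]
    apply Filter.mem_of_superset hVmem
    rintro v ⟨m, w, hwlt, rfl⟩
    obtain ⟨y, -, hyu, hygauge⟩ := key m w hwlt
    have hlt : gauge W₀ (f (u (max n m) y) - f (u n x₀)) < 1 := by
      have : (0:ℝ) < (2:ℝ)⁻¹ ^ m := by positivity
      linarith
    have hmemW₀ : f (u (max n m) y) - f (u n x₀) ∈ W₀ := by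
      have hset := gauge_lt_one_eq_self_of_isOpen hW₀conv hW₀0 hW₀open
      rw [← hset]; exact hlt
    have hfin := hW₀sub hmemW₀
    rw [hyu] at hfin
    simp only [Set.mem_preimage]
    simpa using hfin
  · -- Gateaux analyticity
    intro a ha b
    obtain ⟨n, hn⟩ := Set.mem_iUnion.1 ha
    obtain ⟨x, hx, rfl⟩ := hn
    obtain ⟨m, hm⟩ := hunion b
    obtain ⟨y, rfl⟩ := hm
    have h1 : n ≤ max n m := le_max_left n m
    have h2 : m ≤ max n m := le_max_right n m
    have hx' : iotaX j h1 x ∈ ball (0 : X (max n m)) R := by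
      rw [mem_ball_zero_iff]
      exact lt_of_le_of_lt (iotaX_norm j hj h1 x) (mem_ball_zero_iff.1 hx)
    obtain ⟨ε, hε, c, hc⟩ := hgat (max n m) _ hx' (iotaX j h2 y)
    refine ⟨ε, hε, c, fun z hz => ?_⟩
    have hsum := hc z hz
    rw [map_add, map_smul, iotaX_u j u hcomp, iotaX_u j u hcomp] at hsum
    exact hsum
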